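/- In the setup (G centerless, f, h : G → Aut(G) with h(σ) = conj(g(σ))∘f(σ), g a bijection satisfying g(στ) = g(σ)·f(σ)(g(τ)), and N = {ρ(g(σ))∘f(σ) : σ ∈ G} a normal subgroup of Hol(G)), one has f(G) ∩ Inn(G) = f(ker(f)·ker(h)) and h(G) ∩ Inn(G) = h(ker(f)·ker(h)). -/

import Mathlib

/-- The left regular representation `λ : G →* Perm G`, `λ(σ)(x) = σ·x`. -/
def lambda (G : Type*) [Group G] : G →* Equiv.Perm G where
  toFun σ := Equiv.mulLeft σ
  map_one' := by ext x; simp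
  map_mul' σ τ := by ext x; simp [mul_assoc]

/-- The right regular representation `ρ : G →* Perm G`, `ρ(σ)(x) = x·σ⁻¹`. -/
def rho (G : Type*) [Group G] : G →* Equiv.Perm G where
  toFun σ := Equiv.mulRight σ⁻¹
  map_one' := by ext x; simp
  map_mul' σ τ := by ext x; simp [mul_assoc]

/-- The holomorph `Hol(G)`: the normalizer of `λ(G)` in `Perm G`. -/
def Hol (G : Type*) [Group G] : Subgroup (Equiv.Perm G) :=
  Subgroup.normalizer (((lambda G).range : Subgroup (Equiv.Perm G)) : Set (Equiv.Perm G))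

section Helpers

variable {G : Type*} [Group G]

lemma lambda_apply (a x : G) : lambda G a x = a * x := rfl

lemma rho_apply (a x : G) : rho G a x = x * a⁻¹ := rfl

lemma toPerm_apply (φ : MulAut G) (x : G) : MulAut.toPerm G φ x = φ x := rfl

lemma mem_Hol_of (x : Equiv.Perm G) (F Fi : G → G)
    (hF : ∀ a, x * lambda G a = lambda G (F a) * x)
    (hFi : ∀ a, lambda G a * x = x * lambda G (Fi a)) : x ∈ Hol G := by
  rw [Hol, Subgroup.mem_normalizer_iff]
  intro y
  constructor
  · intro hy
    obtain ⟨a, rfl⟩ := MonoidHom.mem_range.mp hy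
    refine MonoidHom.mem_range.mpr ⟨F a, ?_⟩
    rw [hF, mul_inv_cancel_right]
  · intro hy
    obtain ⟨a, ha⟩ := MonoidHom.mem_range.mp hy
    refine MonoidHom.mem_range.mpr ⟨Fi a, ?_⟩
    have h2 := hFi a
    rw [ha] at h2
    rw [inv_mul_cancel_right] at h2
    exact (mul_left_cancel h2).symm

lemma lambda_mem_Hol (τ : G) : lambda G τ ∈ Hol G := by
  refine mem_Hol_of _ (fun a => τ * a * τ⁻¹) (fun a => τ⁻¹ * a * τ) ?_ ?_
  · intro a; rw [← map_mul, ← map_mul]; congr 1; group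
  · intro a; rw [← map_mul, ← map_mul]; congr 1; group

lemma rho_lambda_comm (τ a : G) : rho G τ * lambda G a = lambda G a * rho G τ := by
  ext x
  simp [Equiv.Perm.mul_apply, lambda_apply, rho_apply, mul_assoc]

lemma rho_mem_Hol (τ : G) : rho G τ ∈ Hol G :=
  mem_Hol_of _ id id (fun a => rho_lambda_comm τ a) (fun a => (rho_lambda_comm τ a).symm)

lemma toPerm_lambda (φ : MulAut G) (a : G) :
    MulAut.toPerm G φ * lambda G a = lambda G (φ a) * MulAut.toPerm G φ := by
  ext x
  simp [Equiv.Perm.mul_apply, lambda_apply, toPerm_apply, map_mul]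

lemma toPerm_mem_Hol (φ : MulAut G) : MulAut.toPerm G φ ∈ Hol G := by
  refine mem_Hol_of _ (fun a => φ a) (fun a => φ⁻¹ a) (toPerm_lambda φ) ?_
  intro a
  have := toPerm_lambda φ (φ⁻¹ a)
  rw [MulAut.apply_inv_self] at this
  exact this.symm

lemma conj_comp (φ : MulAut G) (u : G) :
    MulAut.conj (φ u) = φ * MulAut.conj u * φ⁻¹ := by
  refine MulEquiv.ext fun x => ?_
  simp only [MulAut.conj_apply, MulAut.mul_apply, map_mul, map_inv, MulAut.apply_inv_self]

lemma conj_inj (hZ : Subgroup.center G = ⊥) {a b : G}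
    (hab : MulAut.conj a = MulAut.conj b) : a = b := by
  have hc : b⁻¹ * a ∈ Subgroup.center G := by
    rw [Subgroup.mem_center_iff]
    intro x
    have h1 : a * x * a⁻¹ = b * x * b⁻¹ := by
      have := congrArg (fun φ : MulAut G => φ x) hab
      simpa using this
    have h2 : b⁻¹ * (a * x * a⁻¹) * a = b⁻¹ * (b * x * b⁻¹) * a := by rw [h1]
    calc x * (b⁻¹ * a) = b⁻¹ * (b * x * b⁻¹) * a := by group
      _ = b⁻¹ * (a * x * a⁻¹) * a := h2.symm
      _ = (b⁻¹ * a) * x := by group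
  rw [hZ, Subgroup.mem_bot] at hc
  exact (inv_mul_eq_one.mp hc).symm

end Helpers

/-- In the setup, `f(G) ∩ Inn(G) = f(ker(f)·ker(h))` and
`h(G) ∩ Inn(G) = h(ker(f)·ker(h))` (here `ker(f)·ker(h) = ker f ⊔ ker h`
since both kernels are normal). -/
theorem range_inf_inn_eq_map_ker_sup_ker
    (G : Type*) [Group G] (hZ : Subgroup.center G = ⊥)
    (f h : G →* MulAut G) (g : Equiv.Perm G) (hg1 : g 1 = 1)
    (hrel : ∀ σ τ : G, g (σ * τ) = g σ * (f σ) (g τ))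
    (hh : ∀ σ : G, h σ = MulAut.conj (g σ) * f σ)
    (N : Subgroup (Equiv.Perm G))
    (hN : (N : Set (Equiv.Perm G))
      = {q | ∃ σ : G, q = rho G (g σ) * MulAut.toPerm G (f σ)})
    (hNle : N ≤ Hol G)
    (hNnorm : ∀ x ∈ Hol G, ∀ n ∈ N, x * n * x⁻¹ ∈ N)
    :
    f.range ⊓ (MulAut.conj : G →* MulAut G).range = Subgroup.map f (f.ker ⊔ h.ker) ∧
      h.range ⊓ (MulAut.conj : G →* MulAut G).range = Subgroup.map h (f.ker ⊔ h.ker) := by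
  -- basic facts about the elements of N
  have nmem : ∀ σ : G, rho G (g σ) * MulAut.toPerm G (f σ) ∈ N := by
    intro σ
    rw [← SetLike.mem_coe, hN]
    exact ⟨σ, rfl⟩
  have nform : ∀ q ∈ N, ∃ σ : G, q = rho G (g σ) * MulAut.toPerm G (f σ) := by
    intro q hq
    rw [← SetLike.mem_coe, hN] at hq
    exact hq
  have napp : ∀ σ x : G, (rho G (g σ) * MulAut.toPerm G (f σ)) x = f σ x * (g σ)⁻¹ :=
    fun σ x => rfl
  have nlam : ∀ σ τ : G,
      (rho G (g σ) * MulAut.toPerm G (f σ)) * lambda G τ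
        = lambda G (f σ τ) * (rho G (g σ) * MulAut.toPerm G (f σ)) := by
    intro σ τ
    ext x
    simp [Equiv.Perm.mul_apply, lambda_apply, rho_apply, toPerm_apply, map_mul, mul_assoc]
  -- commutators [n(σ), λ(τ)] give elements λ(f σ τ * τ⁻¹) ∈ N
  have F3 : ∀ σ τ : G, lambda G (f σ τ * τ⁻¹) ∈ N := by
    intro σ τ
    have e : lambda G (f σ τ * τ⁻¹)
        = (rho G (g σ) * MulAut.toPerm G (f σ)) *
          (lambda G τ * (rho G (g σ) * MulAut.toPerm G (f σ))⁻¹ * (lambda G τ)⁻¹) := by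
      rw [map_mul, map_inv]
      calc lambda G (f σ τ) * (lambda G τ)⁻¹
          = (lambda G (f σ τ) * (rho G (g σ) * MulAut.toPerm G (f σ)))
              * (rho G (g σ) * MulAut.toPerm G (f σ))⁻¹ * (lambda G τ)⁻¹ := by group
        _ = ((rho G (g σ) * MulAut.toPerm G (f σ)) * lambda G τ)
              * (rho G (g σ) * MulAut.toPerm G (f σ))⁻¹ * (lambda G τ)⁻¹ := by rw [nlam]
        _ = (rho G (g σ) * MulAut.toPerm G (f σ)) *
              (lambda G τ * (rho G (g σ) * MulAut.toPerm G (f σ))⁻¹ * (lambda G τ)⁻¹) := by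
            group
    rw [e]
    exact mul_mem (nmem σ) (hNnorm _ (lambda_mem_Hol τ) _ (inv_mem (nmem σ)))
  -- the "S-set" {a | λ a ∈ N} is invariant under all automorphisms
  have F2 : ∀ (φ : MulAut G) (a : G), lambda G a ∈ N → lambda G (φ a) ∈ N := by
    intro φ a ha
    have e : lambda G (φ a) = MulAut.toPerm G φ * lambda G a * (MulAut.toPerm G φ)⁻¹ := by
      rw [toPerm_lambda, mul_inv_cancel_right]
    rw [e]
    exact hNnorm _ (toPerm_mem_Hol φ) _ ha
  -- elements of ker h give elements of N ∩ λ(G)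
  have hker_to_lam : ∀ k : G, h k = 1 → lambda G ((g k)⁻¹) ∈ N := by
    intro k hk
    have h2 : MulAut.conj (g k) * f k = 1 := by rw [← hh k, hk]
    have hfk : f k = MulAut.conj ((g k)⁻¹) := by
      rw [map_inv]
      exact eq_inv_of_mul_eq_one_right h2
    have e : lambda G ((g k)⁻¹) = rho G (g k) * MulAut.toPerm G (f k) := by
      ext x
      simp only [lambda_apply, Equiv.Perm.mul_apply, rho_apply, toPerm_apply, hfk,
        MulAut.conj_apply]
      group
    rw [e]
    exact nmem k
  -- elements of N ∩ λ(G) give elements of ker h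
  have lam_to_ker : ∀ a : G, lambda G a ∈ N →
      h (g.symm a⁻¹) = 1 ∧ f (g.symm a⁻¹) = MulAut.conj a := by
    intro a ha
    obtain ⟨σ₁, hq⟩ := nform _ ha
    have e1 : a = (g σ₁)⁻¹ := by
      have := congrArg (fun p : Equiv.Perm G => p 1) hq
      simpa only [lambda_apply, napp, map_one, one_mul, mul_one] using this
    have e2 : g σ₁ = a⁻¹ := by rw [e1, inv_inv]
    have e3 : g.symm a⁻¹ = σ₁ := by rw [← e2, Equiv.symm_apply_apply]
    have hf1 : f σ₁ = MulAut.conj a := by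
      refine MulEquiv.ext fun x => ?_
      have hx := congrArg (fun p : Equiv.Perm G => p x) hq
      simp only [lambda_apply, napp] at hx
      rw [e2, inv_inv] at hx
      -- hx : a * x = f σ₁ x * a
      rw [MulAut.conj_apply]
      exact (mul_inv_eq_iff_eq_mul.mpr hx).symm
    have hh1 : h σ₁ = 1 := by
      rw [hh σ₁, hf1, e2, map_inv, inv_mul_cancel]
    exact ⟨by rw [e3]; exact hh1, by rw [e3]; exact hf1⟩
  have eta_one : ∀ a : G, lambda G a⁻¹ ∈ N → h (g.symm a) = 1 := by
    intro a ha
    have := (lam_to_ker a⁻¹ ha).1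
    rwa [inv_inv] at this
  -- conjugation by automorphism parts
  have F8core : ∀ (φ : MulAut G) (σ : G),
      ∃ σ'' : G, g σ'' = φ (g σ) ∧ f σ'' = φ * f σ * φ⁻¹ := by
    intro φ σ
    have mem : MulAut.toPerm G φ * (rho G (g σ) * MulAut.toPerm G (f σ))
        * (MulAut.toPerm G φ)⁻¹ ∈ N :=
      hNnorm _ (toPerm_mem_Hol φ) _ (nmem σ)
    obtain ⟨σ'', hq⟩ := nform _ mem
    have hq' : MulAut.toPerm G φ * (rho G (g σ) * MulAut.toPerm G (f σ))
        = (rho G (g σ'') * MulAut.toPerm G (f σ'')) * MulAut.toPerm G φ := by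
      rw [← hq]; group
    have e1 : g σ'' = φ (g σ) := by
      have h1 := congrArg (fun p : Equiv.Perm G => p 1) hq'
      simp only [Equiv.Perm.mul_apply, napp, toPerm_apply, map_one, map_inv, one_mul] at h1
      exact inv_injective h1.symm
    have e2 : ∀ y : G, f σ'' (φ y) = φ (f σ y) := by
      intro y
      have h1 := congrArg (fun p : Equiv.Perm G => p y) hq'
      simp only [Equiv.Perm.mul_apply, napp, toPerm_apply, map_mul, map_inv, e1] at h1
      exact mul_right_cancel h1.symm
    refine ⟨σ'', e1, ?_⟩
    refine MulEquiv.ext fun x => ?_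
    have h3 := e2 (φ⁻¹ x)
    rw [MulAut.apply_inv_self] at h3
    simp only [MulAut.mul_apply]
    exact h3
  -- η(x) := h(g⁻¹ x) is Aut-equivariant
  have eta_equivar : ∀ (φ : MulAut G) (x : G),
      h (g.symm (φ x)) = φ * h (g.symm x) * φ⁻¹ := by
    intro φ x
    obtain ⟨σ'', e1, e2⟩ := F8core φ (g.symm x)
    rw [Equiv.apply_symm_apply] at e1
    have e3 : g.symm (φ x) = σ'' := by rw [← e1, Equiv.symm_apply_apply]
    rw [e3, hh σ'', e1, e2, hh (g.symm x), Equiv.apply_symm_apply, conj_comp]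
    group
  -- a transport lemma: if g σ' = a·s with λ s ∈ N then h σ' = h (g⁻¹ a)
  have h_eq_of : ∀ σ' a s : G, lambda G s ∈ N → g σ' = a * s → h σ' = h (g.symm a) := by
    intro σ' a s hs hgs
    have hs' : lambda G ((f (g.symm a))⁻¹ s) ∈ N := F2 _ _ hs
    have hk' : h (g.symm ((f (g.symm a))⁻¹ s)) = 1 := by
      apply eta_one
      rw [map_inv]
      exact inv_mem hs'
    have e4 : g (g.symm a * g.symm ((f (g.symm a))⁻¹ s)) = a * s := by
      rw [hrel, Equiv.apply_symm_apply, Equiv.apply_symm_apply, MulAut.apply_inv_self]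
    have e5 : σ' = g.symm a * g.symm ((f (g.symm a))⁻¹ s) :=
      g.injective (by rw [hgs, e4])
    rw [e5, map_mul, hk', mul_one]
  -- η is a homomorphism
  have eta_hom : ∀ x y : G, h (g.symm (x * y)) = h (g.symm x) * h (g.symm y) := by
    intro x y
    have hsmem : lambda G (y⁻¹ * f (g.symm x) y) ∈ N := by
      have h1 := F3 (g.symm x) y
      have h2 := F2 (MulAut.conj y⁻¹) _ h1
      have e : (MulAut.conj y⁻¹) (f (g.symm x) y * y⁻¹) = y⁻¹ * f (g.symm x) y := by
        rw [MulAut.conj_apply]; group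
      rwa [e] at h2
    have e6 : g (g.symm x * g.symm y) = (x * y) * (y⁻¹ * f (g.symm x) y) := by
      rw [hrel, Equiv.apply_symm_apply, Equiv.apply_symm_apply]; group
    have h7 := h_eq_of _ _ _ hsmem e6
    rw [map_mul] at h7
    exact h7.symm
  have eta_inv : ∀ x : G, h (g.symm x⁻¹) = (h (g.symm x))⁻¹ := by
    intro x
    have e1 := eta_hom x x⁻¹
    rw [mul_inv_cancel] at e1
    have e0 : g.symm (1 : G) = 1 := by
      apply g.injective
      rw [Equiv.apply_symm_apply, hg1]
    rw [e0, map_one] at e1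
    exact eq_inv_of_mul_eq_one_right e1.symm
  -- THE MAIN LEMMA: f σ inner implies σ ∈ ker f ⊔ ker h
  have main : ∀ σ t : G, f σ = MulAut.conj t → σ ∈ f.ker ⊔ h.ker := by
    intro σ t hft
    have stepa : ∀ τ : G, lambda G (t * τ * t⁻¹ * τ⁻¹) ∈ N := by
      intro τ
      have h1 := F3 σ τ
      rw [hft, MulAut.conj_apply] at h1
      exact h1
    have stepb : ∀ τ : G, h (g.symm (τ * t * τ⁻¹ * t⁻¹)) = 1 := by
      intro τ
      apply eta_one
      have e : (τ * t * τ⁻¹ * t⁻¹)⁻¹ = t * τ * t⁻¹ * τ⁻¹ := by group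
      rw [e]
      exact stepa τ
    have K1 : ∀ (φ : MulAut G) (τ : G),
        h (g.symm (τ * (φ τ)⁻¹)) = h (g.symm τ) * φ * (h (g.symm τ))⁻¹ * φ⁻¹ := by
      intro φ τ
      rw [eta_hom τ (φ τ)⁻¹, eta_inv (φ τ), eta_equivar φ τ]
      group
    have stepc : ∀ τ : G, h (g.symm τ) * MulAut.conj t = MulAut.conj t * h (g.symm τ) := by
      intro τ
      have e1 := K1 (MulAut.conj t) τ
      have e2 : τ * ((MulAut.conj t) τ)⁻¹ = τ * t * τ⁻¹ * t⁻¹ := by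
        rw [MulAut.conj_apply]; group
      rw [e2, stepb τ] at e1
      have e3 : h (g.symm τ) * MulAut.conj t * (h (g.symm τ))⁻¹ = MulAut.conj t :=
        mul_inv_eq_one.mp e1.symm
      calc h (g.symm τ) * MulAut.conj t
          = (h (g.symm τ) * MulAut.conj t * (h (g.symm τ))⁻¹) * h (g.symm τ) := by group
        _ = MulAut.conj t * h (g.symm τ) := by rw [e3]
    have stepd : ∀ τ : G, (h (g.symm τ)) t = t := by
      intro τ
      have e1 : MulAut.conj ((h (g.symm τ)) t) = MulAut.conj t := by
        rw [conj_comp, stepc τ, mul_inv_cancel_right]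
      exact conj_inj hZ e1
    have stepe : ∀ τ : G, h (g.symm τ) * h (g.symm t) = h (g.symm t) * h (g.symm τ) := by
      intro τ
      have expand : h (g.symm (τ * t * τ⁻¹ * t⁻¹))
          = h (g.symm τ) * h (g.symm t) * (h (g.symm τ))⁻¹ * (h (g.symm t))⁻¹ := by
        rw [eta_hom (τ * t * τ⁻¹) t⁻¹, eta_hom (τ * t) τ⁻¹, eta_hom τ t, eta_inv τ, eta_inv t]
      rw [stepb τ] at expand
      have e3 : h (g.symm τ) * h (g.symm t) * (h (g.symm τ))⁻¹ = h (g.symm t) :=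
        mul_inv_eq_one.mp expand.symm
      calc h (g.symm τ) * h (g.symm t)
          = (h (g.symm τ) * h (g.symm t) * (h (g.symm τ))⁻¹) * h (g.symm τ) := by group
        _ = h (g.symm t) * h (g.symm τ) := by rw [e3]
    have stepf : ∀ σ' : G, f σ' * h (g.symm t) = h (g.symm t) * f σ' := by
      intro σ'
      have e1 : h (g.symm (f σ' t)) = f σ' * h (g.symm t) * (f σ')⁻¹ := eta_equivar (f σ') t
      have e2 : h (g.symm (f σ' t * t⁻¹)) = 1 := by
        apply eta_one
        rw [map_inv]
        exact inv_mem (F3 σ' t)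
      have e4 : h (g.symm (f σ' t)) = h (g.symm t) := by
        have e5 : f σ' t = (f σ' t * t⁻¹) * t := by group
        rw [e5, eta_hom, e2, one_mul]
      rw [e4] at e1
      have e6 := e1.symm
      calc f σ' * h (g.symm t)
          = (f σ' * h (g.symm t) * (f σ')⁻¹) * f σ' := by group
        _ = h (g.symm t) * f σ' := by rw [e6]
    have stepg : h (g.symm t) = 1 := by
      refine MulEquiv.ext fun u => ?_
      have hu : MulAut.conj u = h (g.symm u) * (f (g.symm u))⁻¹ := by
        have h1 := hh (g.symm u)
        rw [Equiv.apply_symm_apply] at h1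
        rw [h1, mul_inv_cancel_right]
      have c1 : h (g.symm t) * h (g.symm u) = h (g.symm u) * h (g.symm t) := (stepe u).symm
      have c2 : f (g.symm u) * h (g.symm t) = h (g.symm t) * f (g.symm u) := stepf (g.symm u)
      have c2' : h (g.symm t) * (f (g.symm u))⁻¹ = (f (g.symm u))⁻¹ * h (g.symm t) := by
        calc h (g.symm t) * (f (g.symm u))⁻¹
            = (f (g.symm u))⁻¹ * (f (g.symm u) * h (g.symm t)) * (f (g.symm u))⁻¹ := by group
          _ = (f (g.symm u))⁻¹ * (h (g.symm t) * f (g.symm u)) * (f (g.symm u))⁻¹ := by rw [c2]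
          _ = (f (g.symm u))⁻¹ * h (g.symm t) := by group
      have hcomm : h (g.symm t) * MulAut.conj u = MulAut.conj u * h (g.symm t) := by
        rw [hu]
        calc h (g.symm t) * (h (g.symm u) * (f (g.symm u))⁻¹)
            = (h (g.symm t) * h (g.symm u)) * (f (g.symm u))⁻¹ := by group
          _ = (h (g.symm u) * h (g.symm t)) * (f (g.symm u))⁻¹ := by rw [c1]
          _ = h (g.symm u) * (h (g.symm t) * (f (g.symm u))⁻¹) := by group
          _ = h (g.symm u) * ((f (g.symm u))⁻¹ * h (g.symm t)) := by rw [c2']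
          _ = (h (g.symm u) * (f (g.symm u))⁻¹) * h (g.symm t) := by group
      have e1 : MulAut.conj ((h (g.symm t)) u) = MulAut.conj u := by
        rw [conj_comp, hcomm, mul_inv_cancel_right]
      have e2 := conj_inj hZ e1
      simpa using e2
    -- now conclude membership
    have hσ₁h : h (g.symm t⁻¹) = 1 := by rw [eta_inv, stepg, inv_one]
    have hσ₁f : f (g.symm t⁻¹) = MulAut.conj t := by
      have h1 := hh (g.symm t⁻¹)
      rw [hσ₁h, Equiv.apply_symm_apply] at h1
      have h2 : MulAut.conj t⁻¹ * f (g.symm t⁻¹) = 1 := h1.symm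
      have h3 : f (g.symm t⁻¹) = (MulAut.conj t⁻¹)⁻¹ := eq_inv_of_mul_eq_one_right h2
      rw [h3, map_inv, inv_inv]
    have hker1 : σ * (g.symm t⁻¹)⁻¹ ∈ f.ker := by
      rw [MonoidHom.mem_ker, map_mul, map_inv, hσ₁f, hft, mul_inv_cancel]
    have hker2 : g.symm t⁻¹ ∈ h.ker := by rw [MonoidHom.mem_ker]; exact hσ₁h
    have e : σ = (σ * (g.symm t⁻¹)⁻¹) * (g.symm t⁻¹) := by group
    rw [e]
    exact mul_mem (Subgroup.mem_sup_left hker1) (Subgroup.mem_sup_right hker2)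
  -- also for h:
  have mainh : ∀ σ u : G, h σ = MulAut.conj u → σ ∈ f.ker ⊔ h.ker := by
    intro σ u hhu
    apply main σ ((g σ)⁻¹ * u)
    have h1 := hh σ
    rw [hhu] at h1
    -- h1 : conj u = conj (g σ) * f σ
    have h2 : f σ = (MulAut.conj (g σ))⁻¹ * MulAut.conj u := by
      rw [h1]; group
    rw [h2, ← map_inv, ← map_mul]
  constructor
  · apply le_antisymm
    · intro x hx
      obtain ⟨hx1, hx2⟩ := Subgroup.mem_inf.mp hx
      obtain ⟨σ, hσ⟩ := MonoidHom.mem_range.mp hx1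
      obtain ⟨u, hu⟩ := MonoidHom.mem_range.mp hx2
      have hft : f σ = MulAut.conj u := by rw [hσ, hu]
      exact Subgroup.mem_map.mpr ⟨σ, main σ u hft, hσ⟩
    · refine le_inf ?_ ?_
      · intro x hx
        obtain ⟨σ, _, rfl⟩ := Subgroup.mem_map.mp hx
        exact MonoidHom.mem_range.mpr ⟨σ, rfl⟩
      · rw [Subgroup.map_sup]
        refine sup_le ?_ ?_
        · intro x hx
          obtain ⟨σ, hσ, rfl⟩ := Subgroup.mem_map.mp hx
          rw [MonoidHom.mem_ker] at hσ
          rw [hσ]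
          exact one_mem _
        · intro x hx
          obtain ⟨σ, hσ, rfl⟩ := Subgroup.mem_map.mp hx
          rw [MonoidHom.mem_ker] at hσ
          have h2 : MulAut.conj (g σ) * f σ = 1 := by rw [← hh σ, hσ]
          refine MonoidHom.mem_range.mpr ⟨(g σ)⁻¹, ?_⟩
          rw [map_inv]
          exact inv_eq_of_mul_eq_one_right h2
  · apply le_antisymm
    · intro x hx
      obtain ⟨hx1, hx2⟩ := Subgroup.mem_inf.mp hx
      obtain ⟨σ, hσ⟩ := MonoidHom.mem_range.mp hx1
      obtain ⟨u, hu⟩ := MonoidHom.mem_range.mp hx2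
      have hhu : h σ = MulAut.conj u := by rw [hσ, hu]
      exact Subgroup.mem_map.mpr ⟨σ, mainh σ u hhu, hσ⟩
    · refine le_inf ?_ ?_
      · intro x hx
        obtain ⟨σ, _, rfl⟩ := Subgroup.mem_map.mp hx
        exact MonoidHom.mem_range.mpr ⟨σ, rfl⟩
      · rw [Subgroup.map_sup]
        refine sup_le ?_ ?_
        · intro x hx
          obtain ⟨σ, hσ, rfl⟩ := Subgroup.mem_map.mp hx
          rw [MonoidHom.mem_ker] at hσ
          refine MonoidHom.mem_range.mpr ⟨g σ, ?_⟩
          rw [hh σ, hσ, mul_one]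
        · intro x hx
          obtain ⟨σ, hσ, rfl⟩ := Subgroup.mem_map.mp hx
          rw [MonoidHom.mem_ker] at hσ
          rw [hσ]
          exact one_mem _
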